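/- Let G be a finite connected simple graph with vertex set V, and B ⊆ V an independent set of at least 2 vertices (boundary nodes). Define: a crossing is a minimal path in G between two distinct boundary nodes; let Ĝ be the graph obtained from G by adding an edge between every pair of boundary nodes. Then Ĝ is chordal if and only if there is no chordless cycle of G of length ≥ 4 meeting at most one boundary node, and no chordless crossing X (i.e., no edge of G joins two distinct vertices met by X) with |X| ≥ 3. -/

import Mathlib

open SimpleGraph

variable {V : Type}

/-- A *crossing* of `(G, B)` is a minimal path between two distinct boundary nodes,
i.e. a path whose endpoints are distinct boundary nodes and whose interior vertices
are not boundary nodes. -/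
def IsCrossing (G : SimpleGraph V) (B : Set V) {a b : V} (p : G.Walk a b) : Prop :=
  p.IsPath ∧ a ∈ B ∧ b ∈ B ∧ a ≠ b ∧ ∀ v ∈ p.support, v ∈ B → v = a ∨ v = b

/-- The graph `Ĝ` obtained from `G` by adding an edge between every pair of distinct
boundary nodes. -/
def GHat (G : SimpleGraph V) (B : Set V) : SimpleGraph V :=
  G ⊔ SimpleGraph.fromRel (fun a b => a ∈ B ∧ b ∈ B)

/-- A graph is *chordal* if every cycle of length at least 4 has a chord: an edge of the
graph joining two vertices of the cycle that is not an edge of the cycle. -/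
def IsChordal (G : SimpleGraph V) : Prop :=
  ∀ (v : V) (p : G.Walk v v), p.IsCycle → 4 ≤ p.length →
    ∃ a b, G.Adj a b ∧ a ∈ p.support ∧ b ∈ p.support ∧ s(a, b) ∉ p.edges

lemma ghat_adj {G : SimpleGraph V} {B : Set V} {u v : V} :
    (GHat G B).Adj u v ↔ G.Adj u v ∨ (u ≠ v ∧ u ∈ B ∧ v ∈ B) := by
  simp only [GHat, sup_adj, fromRel_adj]
  tauto

lemma closed_mem_tail {G : SimpleGraph V} {x : V} {c : G.Walk x x} (hc : ¬c.Nil) :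
    x ∈ c.support.tail := by
  cases c with
  | nil => simp at hc
  | cons h q => simpa using q.end_mem_support

lemma closed_mem_iff {G : SimpleGraph V} {x : V} {c : G.Walk x x} (hc : ¬c.Nil) {v : V} :
    v ∈ c.support ↔ v ∈ c.support.tail := by
  constructor
  · intro h
    rw [c.support_eq_cons, List.mem_cons] at h
    exact h.elim (fun h => h ▸ closed_mem_tail hc) id
  · intro h
    rw [c.support_eq_cons, List.mem_cons]
    exact Or.inr h

lemma length_rotate [DecidableEq V] {G : SimpleGraph V} {x u : V} {c : G.Walk x x}
    (hx : u ∈ c.support) : (c.rotate u hx).length = c.length := by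
  have h := congr_arg SimpleGraph.Walk.length (c.take_spec hx)
  rw [SimpleGraph.Walk.length_append] at h
  rw [SimpleGraph.Walk.rotate, SimpleGraph.Walk.length_append]
  omega

lemma mem_rotate [DecidableEq V] {G : SimpleGraph V} {x u : V} {c : G.Walk x x}
    (hc : c.IsCycle) (hx : u ∈ c.support) {v : V} :
    v ∈ (c.rotate u hx).support ↔ v ∈ c.support := by
  have h3 := hc.three_le_length
  have h1 : ¬c.Nil := SimpleGraph.Walk.not_nil_iff_lt_length.2 (by omega)
  have h2 : ¬(c.rotate u hx).Nil := by
    rw [SimpleGraph.Walk.not_nil_iff_lt_length, length_rotate]; omega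
  rw [closed_mem_iff h2, closed_mem_iff h1, (c.support_rotate u hx).mem_iff]

lemma path_edge_end {G : SimpleGraph V} {u v : V} (p : G.Walk u v) (hp : p.IsPath)
    (he : s(u, v) ∈ p.edges) : p.length = 1 ∧ p.edges = [s(u, v)] := by
  cases p with
  | nil => simp at he
  | @cons _ w _ h q =>
    rw [SimpleGraph.Walk.edges_cons, List.mem_cons] at he
    rw [SimpleGraph.Walk.cons_isPath_iff] at hp
    rcases he with he | he
    · have hvw : v = w := Sym2.congr_right.1 he
      subst hvw
      have hnil : q.Nil := by
        by_contra hn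
        have h1 := closed_mem_tail hn
        have h2 := hp.1
        rw [SimpleGraph.Walk.isPath_def, q.support_eq_cons, List.nodup_cons] at h2
        exact h2.1 h1
      have hlen : q.length = 0 := SimpleGraph.Walk.nil_iff_length_eq.1 hnil
      have hed : q.edges = [] :=
        List.length_eq_zero_iff.1 (by rw [SimpleGraph.Walk.length_edges]; exact hlen)
      refine ⟨by simp [hlen], by simp [hed]⟩
    · exact absurd (q.fst_mem_support_of_mem_edges he) hp.2

lemma path_split_disjoint [DecidableEq V] {G : SimpleGraph V} {u w z : V} {p : G.Walk u w}
    (hp : p.IsPath) (hz : z ∈ p.support) :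
    (p.takeUntil z hz).support.Disjoint (p.dropUntil z hz).support.tail := by
  rw [SimpleGraph.Walk.isPath_def, ← p.take_spec hz, SimpleGraph.Walk.support_append,
    List.nodup_append'] at hp
  exact hp.2.2

lemma edges_split [DecidableEq V] {G : SimpleGraph V} {u w z : V} (p : G.Walk u w)
    (hz : z ∈ p.support) :
    p.edges = (p.takeUntil z hz).edges ++ (p.dropUntil z hz).edges := by
  conv_lhs => rw [← p.take_spec hz]
  rw [SimpleGraph.Walk.edges_append]

lemma edge_mem_take [DecidableEq V] {G : SimpleGraph V} {u w z : V} {p : G.Walk u w}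
    (hp : p.IsPath) (hz : z ∈ p.support) (hzu : z ≠ u) (he : s(u, z) ∈ p.edges) :
    s(u, z) ∈ (p.takeUntil z hz).edges := by
  rw [edges_split p hz, List.mem_append] at he
  rcases he with he | he
  · exact he
  · exfalso
    have hu2 : u ∈ (p.dropUntil z hz).support :=
      SimpleGraph.Walk.fst_mem_support_of_mem_edges _ he
    rw [(p.dropUntil z hz).support_eq_cons, List.mem_cons] at hu2
    rcases hu2 with h' | h'
    · exact hzu h'.symm
    · exact path_split_disjoint hp hz ((p.takeUntil z hz).start_mem_support) h'

lemma edge_mem_drop [DecidableEq V] {G : SimpleGraph V} {u w z : V} {p : G.Walk u w}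
    (hp : p.IsPath) (hz : z ∈ p.support) (hzw : z ≠ w) (he : s(w, z) ∈ p.edges) :
    s(w, z) ∈ (p.dropUntil z hz).edges := by
  rw [edges_split p hz, List.mem_append] at he
  rcases he with he | he
  · exfalso
    have hw1 : w ∈ (p.takeUntil z hz).support :=
      SimpleGraph.Walk.fst_mem_support_of_mem_edges _ he
    have hw2 : w ∈ (p.dropUntil z hz).support := SimpleGraph.Walk.end_mem_support _
    rw [(p.dropUntil z hz).support_eq_cons, List.mem_cons] at hw2
    rcases hw2 with h' | h'
    · exact hzw h'.symm
    · exact path_split_disjoint hp hz hw1 h'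
  · exact he

lemma path_two_edges [DecidableEq V] {G : SimpleGraph V} {u w z : V} {p : G.Walk u w}
    (hp : p.IsPath) (hz : z ∈ p.support) (hzu : z ≠ u) (hzw : z ≠ w)
    (h1 : s(u, z) ∈ p.edges) (h2 : s(w, z) ∈ p.edges) : p.length = 2 := by
  have t1 := (path_edge_end _ (hp.takeUntil hz) (edge_mem_take hp hz hzu h1)).1
  have t2 := (path_edge_end _ (hp.dropUntil hz)
    (by rw [Sym2.eq_swap] at h2 ⊢; exact edge_mem_drop hp hz hzw (by rwa [Sym2.eq_swap]))).1
  have h := congr_arg SimpleGraph.Walk.length (p.take_spec hz)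
  rw [SimpleGraph.Walk.length_append] at h
  omega

lemma cycle_split [DecidableEq V] {G : SimpleGraph V} {x y : V} {d : G.Walk x x}
    (hd : d.IsCycle) (hy : y ∈ d.support) (hyx : y ≠ x) :
    (d.takeUntil y hy).IsPath ∧ (d.dropUntil y hy).IsPath := by
  have hsup : d.support = (d.takeUntil y hy).support ++ (d.dropUntil y hy).support.tail := by
    conv_lhs => rw [← d.take_spec hy]
    rw [SimpleGraph.Walk.support_append]
  have htail : d.support.tail =
      (d.takeUntil y hy).support.tail ++ (d.dropUntil y hy).support.tail := by
    have h2 := hsup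
    rw [(d.takeUntil y hy).support_eq_cons, List.cons_append] at h2
    rw [d.support_eq_cons] at h2
    exact (List.cons.injEq _ _ _ _ ▸ h2).2
  have hnd := hd.support_nodup
  rw [htail, List.nodup_append'] at hnd
  have hxp2 : x ∈ (d.dropUntil y hy).support.tail := by
    have hx : x ∈ (d.dropUntil y hy).support := SimpleGraph.Walk.end_mem_support _
    rw [(d.dropUntil y hy).support_eq_cons, List.mem_cons] at hx
    exact hx.elim (fun h => absurd h.symm hyx) id
  have hyp1 : y ∈ (d.takeUntil y hy).support.tail :=
    SimpleGraph.Walk.end_mem_tail_support_of_ne (Ne.symm hyx) _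
  constructor
  · rw [SimpleGraph.Walk.isPath_def, (d.takeUntil y hy).support_eq_cons, List.nodup_cons]
    exact ⟨fun hx1 => hnd.2.2 hx1 hxp2, hnd.1⟩
  · rw [SimpleGraph.Walk.isPath_def, (d.dropUntil y hy).support_eq_cons, List.nodup_cons]
    exact ⟨fun hy2 => hnd.2.2 hyp1 hy2, hnd.2.1⟩

lemma crossing_chord {G : SimpleGraph V} {B : Set V}
    (hind : ∀ a ∈ B, ∀ b ∈ B, ¬G.Adj a b)
    (cond2 : ∀ (a b : V) (p : G.Walk a b), IsCrossing G B p → 3 ≤ p.length →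
      ∃ x y, G.Adj x y ∧ x ∈ p.support ∧ y ∈ p.support ∧ s(x, y) ∉ p.edges)
    {x y : V} (hx : x ∈ B) (hy : y ∈ B) (hxy : x ≠ y)
    (p : (GHat G B).Walk x y) (hp : p.IsPath) (hlen : 3 ≤ p.length)
    (hne : s(x, y) ∉ p.edges) (hbd : ∀ v ∈ p.support, v ∈ B → v = x ∨ v = y) :
    ∃ a b, G.Adj a b ∧ a ∈ p.support ∧ b ∈ p.support ∧ s(a, b) ∉ p.edges := by
  have hG : ∀ e ∈ p.edges, e ∈ G.edgeSet := by
    intro e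
    refine Sym2.ind (fun u v he => ?_) e
    rcases ghat_adj.1 (p.adj_of_mem_edges he) with h | ⟨hne', hu, hv⟩
    · exact h
    · exfalso
      have hu' := hbd u (p.fst_mem_support_of_mem_edges he) hu
      have hv' := hbd v (p.snd_mem_support_of_mem_edges he) hv
      apply hne
      rcases hu' with rfl | rfl <;> rcases hv' with rfl | rfl
      · exact absurd rfl hne'
      · exact he
      · rw [Sym2.eq_swap]; exact he
      · exact absurd rfl hne'
  obtain ⟨a, b, hab, ha, hbb, hne2⟩ := cond2 x y (p.transfer G hG)
    ⟨hp.transfer hG, hx, hy, hxy, by rw [SimpleGraph.Walk.support_transfer]; exact hbd⟩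
    (by rw [SimpleGraph.Walk.length_transfer]; exact hlen)
  rw [SimpleGraph.Walk.support_transfer] at ha hbb
  rw [SimpleGraph.Walk.edges_transfer] at hne2
  exact ⟨a, b, hab, ha, hbb, hne2⟩

/-- `Ĝ` is chordal iff `G` has no chordless cycle of length ≥ 4 meeting at most one
boundary node and no chordless crossing with at least 3 edges. -/
theorem stmt6 [Fintype V] (G : SimpleGraph V) (hconn : G.Connected)
    (B : Set V) (hB : 2 ≤ B.ncard) (hind : ∀ a ∈ B, ∀ b ∈ B, ¬G.Adj a b) :
    IsChordal (GHat G B) ↔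
      ((∀ (v : V) (p : G.Walk v v), p.IsCycle → 4 ≤ p.length →
          (∀ x ∈ p.support, x ∈ B → ∀ y ∈ p.support, y ∈ B → x = y) →
          ∃ a b, G.Adj a b ∧ a ∈ p.support ∧ b ∈ p.support ∧ s(a, b) ∉ p.edges) ∧
        (∀ (a b : V) (p : G.Walk a b), IsCrossing G B p → 3 ≤ p.length →
          ∃ x y, G.Adj x y ∧ x ∈ p.support ∧ y ∈ p.support ∧ s(x, y) ∉ p.edges)) := by
  classical
  have hle : G ≤ GHat G B := le_sup_left
  constructor
  · intro hch
    constructor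
    · -- chordal → no chordless cycle meeting ≤ 1 boundary node
      intro v p hcyc hlen hmeet
      have hsub : ∀ e ∈ p.edges, e ∈ (GHat G B).edgeSet :=
        fun e he => edgeSet_mono hle (p.edges_subset_edgeSet he)
      obtain ⟨a, b, hab, ha, hb, hne⟩ := hch v (p.transfer _ hsub) (hcyc.transfer hsub)
        (by rw [SimpleGraph.Walk.length_transfer]; exact hlen)
      rw [SimpleGraph.Walk.support_transfer] at ha hb
      rw [SimpleGraph.Walk.edges_transfer] at hne
      rcases ghat_adj.1 hab with h | ⟨hne', haB, hbB⟩
      · exact ⟨a, b, h, ha, hb, hne⟩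
      · exact absurd (hmeet a ha haB b hb hbB) hne'
    · -- chordal → no chordless crossing of length ≥ 3
      intro a b p hcr hlen
      obtain ⟨hp, haB, hbB, hab, hbd⟩ := hcr
      have hsub : ∀ e ∈ p.edges, e ∈ (GHat G B).edgeSet :=
        fun e he => edgeSet_mono hle (p.edges_subset_edgeSet he)
      have hadj : (GHat G B).Adj a b := ghat_adj.2 (Or.inr ⟨hab, haB, hbB⟩)
      have hnab : s(a, b) ∉ p.edges := fun hmem =>
        hind a haB b hbB (p.adj_of_mem_edges hmem)
      have hcycle : (SimpleGraph.Walk.cons hadj (p.transfer _ hsub).reverse).IsCycle := by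
        rw [SimpleGraph.Walk.cons_isCycle_iff]
        refine ⟨(hp.transfer hsub).reverse, ?_⟩
        rw [SimpleGraph.Walk.edges_reverse, List.mem_reverse,
          SimpleGraph.Walk.edges_transfer]
        exact hnab
      obtain ⟨u, w, huw, hu, hw, hnuw⟩ := hch a _ hcycle
        (by
          rw [SimpleGraph.Walk.length_cons, SimpleGraph.Walk.length_reverse,
            SimpleGraph.Walk.length_transfer]
          omega)
      have hsupc : ∀ z, z ∈ (SimpleGraph.Walk.cons hadj (p.transfer _ hsub).reverse).support →
          z ∈ p.support := by
        intro z hz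
        rw [SimpleGraph.Walk.support_cons, List.mem_cons, SimpleGraph.Walk.support_reverse,
          List.mem_reverse, SimpleGraph.Walk.support_transfer] at hz
        exact hz.elim (fun h => h ▸ p.start_mem_support) id
      have hedgc : ∀ e, e ∈ p.edges →
          e ∈ (SimpleGraph.Walk.cons hadj (p.transfer _ hsub).reverse).edges := by
        intro e he
        rw [SimpleGraph.Walk.edges_cons, List.mem_cons, SimpleGraph.Walk.edges_reverse,
          List.mem_reverse, SimpleGraph.Walk.edges_transfer]
        exact Or.inr he
      rcases ghat_adj.1 huw with h | ⟨hne', huB, hwB⟩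
      · exact ⟨u, w, h, hsupc u hu, hsupc w hw, fun hmem => hnuw (hedgc _ hmem)⟩
      · exfalso
        have hu' := hbd u (hsupc u hu) huB
        have hw' := hbd w (hsupc w hw) hwB
        apply hnuw
        have heq : s(u, w) = s(a, b) := by
          rcases hu' with rfl | rfl <;> rcases hw' with rfl | rfl
          · exact absurd rfl hne'
          · rfl
          · exact Sym2.eq_swap
          · exact absurd rfl hne'
        rw [heq, SimpleGraph.Walk.edges_cons]
        exact List.mem_cons_self
  · rintro ⟨cond1, cond2⟩
    intro v c hcyc hlen
    by_cases h1 : ∀ x ∈ c.support, x ∈ B → ∀ y ∈ c.support, y ∈ B → x = y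
    · -- case A : at most one boundary vertex
      have hG : ∀ e ∈ c.edges, e ∈ G.edgeSet := by
        intro e
        refine Sym2.ind (fun u w he => ?_) e
        rcases ghat_adj.1 (c.adj_of_mem_edges he) with h | ⟨hne', hu, hw⟩
        · exact h
        · exact absurd (h1 u (c.fst_mem_support_of_mem_edges he) hu
            w (c.snd_mem_support_of_mem_edges he) hw) hne'
      obtain ⟨a, b, hab, ha, hb, hne⟩ := cond1 v (c.transfer G hG) (hcyc.transfer hG)
        (by rw [SimpleGraph.Walk.length_transfer]; exact hlen)
        (by rw [SimpleGraph.Walk.support_transfer]; exact h1)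
      rw [SimpleGraph.Walk.support_transfer] at ha hb
      rw [SimpleGraph.Walk.edges_transfer] at hne
      exact ⟨a, b, ghat_adj.2 (Or.inl hab), ha, hb, hne⟩
    · push_neg at h1
      obtain ⟨x, hxs, hxB, y, hys, hyB, hxy⟩ := h1
      by_cases hxyE : s(x, y) ∈ c.edges
      swap
      · exact ⟨x, y, ghat_adj.2 (Or.inr ⟨hxy, hxB, hyB⟩), hxs, hys, hxyE⟩
      have hd : (c.rotate x hxs).IsCycle := hcyc.rotate hxs
      have hmemd : ∀ z : V, z ∈ (c.rotate x hxs).support ↔ z ∈ c.support :=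
        fun z => mem_rotate hcyc hxs
      have hedgd : ∀ e, e ∈ (c.rotate x hxs).edges ↔ e ∈ c.edges :=
        fun e => (c.rotate_edges x hxs).mem_iff
      have hyd : y ∈ (c.rotate x hxs).support := (hmemd y).2 hys
      have hxyd : s(x, y) ∈ (c.rotate x hxs).edges := (hedgd _).2 hxyE
      obtain ⟨hp1, hp2⟩ := cycle_split hd hyd hxy.symm
      set d := c.rotate x hxs with hddef
      set p1 := d.takeUntil y hyd with hp1def
      set p2 := d.dropUntil y hyd with hp2def
      have hdedges : d.edges = p1.edges ++ p2.edges := edges_split d hyd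
      have hnodup := hd.isTrail.edges_nodup
      rw [hdedges, List.nodup_append'] at hnodup
      have hlend : p1.length + p2.length = c.length := by
        have h := congr_arg SimpleGraph.Walk.length (d.take_spec hyd)
        rw [SimpleGraph.Walk.length_append] at h
        rw [← length_rotate hxs]
        exact h
      have hsub1 : ∀ z, z ∈ p1.support → z ∈ c.support := fun z hz =>
        (hmemd z).1 (SimpleGraph.Walk.support_takeUntil_subset d hyd hz)
      have hsub2 : ∀ z, z ∈ p2.support → z ∈ c.support := fun z hz =>
        (hmemd z).1 (SimpleGraph.Walk.support_dropUntil_subset d hyd hz)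
      rw [hdedges, List.mem_append] at hxyd
      by_cases h3 : ∃ z, z ∈ c.support ∧ z ∈ B ∧ z ≠ x ∧ z ≠ y
      · -- case C : at least three boundary vertices → cycle is a triangle, contradiction
        obtain ⟨z, hzs, hzB, hzx, hzy⟩ := h3
        by_cases hxzE : s(x, z) ∈ c.edges
        swap
        · exact ⟨x, z, ghat_adj.2 (Or.inr ⟨hzx.symm, hxB, hzB⟩), hxs, hzs, hxzE⟩
        by_cases hyzE : s(y, z) ∈ c.edges
        swap
        · exact ⟨y, z, ghat_adj.2 (Or.inr ⟨hzy.symm, hyB, hzB⟩), hys, hzs, hyzE⟩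
        exfalso
        have hxzd : s(x, z) ∈ p1.edges ∨ s(x, z) ∈ p2.edges := by
          rw [← List.mem_append, ← hdedges]; exact (hedgd _).2 hxzE
        have hyzd : s(y, z) ∈ p1.edges ∨ s(y, z) ∈ p2.edges := by
          rw [← List.mem_append, ← hdedges]; exact (hedgd _).2 hyzE
        rcases hxyd with hin1 | hin2
        · obtain ⟨hl1, he1⟩ := path_edge_end p1 hp1 hin1
          have hxz2 : s(x, z) ∈ p2.edges := by
            rcases hxzd with h | h
            · rw [he1, List.mem_singleton] at h
              exact absurd (Sym2.congr_right.1 h) hzy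
            · exact h
          have hyz2 : s(y, z) ∈ p2.edges := by
            rcases hyzd with h | h
            · rw [he1, List.mem_singleton, Sym2.eq_iff] at h
              rcases h with ⟨h1', h2'⟩ | ⟨h1', h2'⟩
              · exact absurd h1'.symm hxy
              · exact absurd h2' hzx
            · exact h
          have hz2 : z ∈ p2.support := p2.snd_mem_support_of_mem_edges hyz2
          have := path_two_edges hp2 hz2 hzy hzx hyz2 hxz2
          omega
        · have hin2' : s(y, x) ∈ p2.edges := by rwa [Sym2.eq_swap] at hin2
          obtain ⟨hl2, he2⟩ := path_edge_end p2 hp2 hin2'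
          have hxz1 : s(x, z) ∈ p1.edges := by
            rcases hxzd with h | h
            · exact h
            · rw [he2, List.mem_singleton, Sym2.eq_iff] at h
              rcases h with ⟨h1', h2'⟩ | ⟨h1', h2'⟩
              · exact absurd h1' hxy
              · exact absurd h2' hzy
          have hyz1 : s(y, z) ∈ p1.edges := by
            rcases hyzd with h | h
            · exact h
            · rw [he2, List.mem_singleton] at h
              exact absurd (Sym2.congr_right.1 h) hzx
          have hz1 : z ∈ p1.support := p1.snd_mem_support_of_mem_edges hxz1
          have := path_two_edges hp1 hz1 hzx hzy hxz1 hyz1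
          omega
      · -- case B : exactly two boundary vertices
        have hbd' : ∀ z, z ∈ c.support → z ∈ B → z = x ∨ z = y := by
          intro z hz hzB
          by_contra hcon
          push_neg at hcon
          exact h3 ⟨z, hz, hzB, hcon.1, hcon.2⟩
        rcases hxyd with hin1 | hin2
        · obtain ⟨hl1, he1⟩ := path_edge_end p1 hp1 hin1
          have hlen2 : 3 ≤ p2.length := by omega
          have hnotin : s(y, x) ∉ p2.edges := by
            intro hmem
            rw [Sym2.eq_swap] at hmem
            exact hnodup.2.2 hin1 hmem
          have hbd2 : ∀ v' ∈ p2.support, v' ∈ B → v' = y ∨ v' = x := fun z hz hzB =>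
            (hbd' z (hsub2 z hz) hzB).symm
          obtain ⟨a, b, hab, ha, hb, hne2⟩ :=
            crossing_chord hind cond2 hyB hxB hxy.symm p2 hp2 hlen2 hnotin hbd2
          refine ⟨a, b, ghat_adj.2 (Or.inl hab), hsub2 a ha, hsub2 b hb, ?_⟩
          intro hmem
          have hmd : s(a, b) ∈ d.edges := (hedgd _).2 hmem
          rw [hdedges, List.mem_append] at hmd
          rcases hmd with h | h
          · rw [he1, List.mem_singleton, Sym2.eq_iff] at h
            rcases h with ⟨rfl, rfl⟩ | ⟨rfl, rfl⟩
            · exact hind a hxB b hyB hab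
            · exact hind b hxB a hyB hab.symm
          · exact hne2 h
        · have hin2' : s(y, x) ∈ p2.edges := by rwa [Sym2.eq_swap] at hin2
          obtain ⟨hl2, he2⟩ := path_edge_end p2 hp2 hin2'
          have hlen1 : 3 ≤ p1.length := by omega
          have hnotin : s(x, y) ∉ p1.edges := fun hmem => hnodup.2.2 hmem hin2
          have hbd1 : ∀ v' ∈ p1.support, v' ∈ B → v' = x ∨ v' = y := fun z hz hzB =>
            hbd' z (hsub1 z hz) hzB
          obtain ⟨a, b, hab, ha, hb, hne2⟩ :=
            crossing_chord hind cond2 hxB hyB hxy p1 hp1 hlen1 hnotin hbd1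
          refine ⟨a, b, ghat_adj.2 (Or.inl hab), hsub1 a ha, hsub1 b hb, ?_⟩
          intro hmem
          have hmd : s(a, b) ∈ d.edges := (hedgd _).2 hmem
          rw [hdedges, List.mem_append] at hmd
          rcases hmd with h | h
          · exact hne2 h
          · rw [he2, List.mem_singleton, Sym2.eq_iff] at h
            rcases h with ⟨rfl, rfl⟩ | ⟨rfl, rfl⟩
            · exact hind b hxB a hyB hab.symm
            · exact hind a hxB b hyB hab
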